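/- Fix a real number a > 1 and define m_k = (a^{k+1} − a^{−(k+1)})/(a − a^{−1}) for k ∈ ℕ. Let T be the bounded operator on ℓ²(ℕ; ℂ) determined by T e_k = √(m_1/2)·(√(m_k/m_{k+1})·e_{k+1} − √(m_{k+1}/m_k)·e_k). Then for every k ≥ 1, T( √(2/m_1)·Σ_{i=0}^{k−1} e_i/√(m_i·m_{i+1}) ) = e_k/m_k − e_0. -/

import Mathlib

/-- The Hilbert space `ℓ²(ℕ; ℂ)`. -/
noncomputable abbrev L2N : Type := lp (fun _ : ℕ => ℂ) 2

/-- The standard orthonormal basis vector `e k` of `ℓ²(ℕ; ℂ)`. -/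
noncomputable def stdVec (k : ℕ) : L2N := lp.single 2 k (1 : ℂ)

/-- **The path formula in the classical subtree of the quantum Cayley tree of `A_o(Q)`**
(half-line case of `E₂(ζ_α) = ξ̃_α/m_α − ξ₀` from Section 4.1 of the paper).
Fix `a > 1`, let `m_k = (a^{k+1} − a^{−(k+1)})/(a − a^{−1})`, and let `T` be the bounded
operator on `ℓ²(ℕ; ℂ)` with `T e_k = √(m₁/2)·(√(m_k/m_{k+1})·e_{k+1} − √(m_{k+1}/m_k)·e_k)`.
Then for every `k ≥ 1`,
`T(√(2/m₁)·Σ_{i<k} e_i/√(m_i·m_{i+1})) = e_k/m_k − e_0`. -/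
theorem stmt_8 (a : ℝ) (ha : 1 < a) (m : ℕ → ℝ)
    (hm : ∀ k : ℕ, m k = (a ^ (k + 1) - (a ^ (k + 1))⁻¹) / (a - a⁻¹))
    (T : L2N →L[ℂ] L2N)
    (hT : ∀ k : ℕ, T (stdVec k) = (Real.sqrt (m 1 / 2) : ℂ) •
        ((Real.sqrt (m k / m (k + 1)) : ℂ) • stdVec (k + 1)
          - (Real.sqrt (m (k + 1) / m k) : ℂ) • stdVec k)) :
    ∀ k : ℕ, 1 ≤ k →
      T ((Real.sqrt (2 / m 1) : ℂ) •
          ∑ i ∈ Finset.range k, ((Real.sqrt (m i * m (i + 1)))⁻¹ : ℂ) • stdVec i)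
        = ((m k)⁻¹ : ℂ) • stdVec k - stdVec 0 := by
  intro k hk
  have ha0 : 0 < a := lt_trans one_pos ha
  have hden : 0 < a - a⁻¹ := by
    have : a⁻¹ < 1 := inv_lt_one_of_one_lt₀ ha
    linarith
  have hmpos : ∀ n : ℕ, 0 < m n := by
    intro n
    rw [hm]
    apply div_pos _ hden
    have h1 : 1 < a ^ (n + 1) := one_lt_pow₀ ha (by omega)
    have : (a ^ (n + 1))⁻¹ < 1 := inv_lt_one_of_one_lt₀ h1
    linarith
  have hm0 : m 0 = 1 := by
    rw [hm]; norm_num; exact ne_of_gt hden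
  have hm1 : 0 < m 1 := hmpos 1
  have key_real : ∀ x y : ℝ, 0 < x → 0 < y →
      Real.sqrt (2 / m 1) * ((Real.sqrt (x * y))⁻¹ *
        (Real.sqrt (m 1 / 2) * Real.sqrt (x / y))) = y⁻¹ := by
    intro x y hx hy
    rw [← Real.sqrt_inv, ← Real.sqrt_mul (by positivity),
      ← Real.sqrt_mul (by positivity), ← Real.sqrt_mul (by positivity)]
    rw [show 2 / m 1 * ((x * y)⁻¹ * (m 1 / 2 * (x / y))) = (y⁻¹) ^ 2 by
      field_simp]
    exact Real.sqrt_sq (by positivity)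
  have key : ∀ i : ℕ,
      (Real.sqrt (2 / m 1) : ℂ) • ((Real.sqrt (m i * m (i + 1)))⁻¹ : ℂ) •
        ((Real.sqrt (m 1 / 2) : ℂ) •
          ((Real.sqrt (m i / m (i + 1)) : ℂ) • stdVec (i + 1)
            - (Real.sqrt (m (i + 1) / m i) : ℂ) • stdVec i))
      = ((m (i + 1))⁻¹ : ℂ) • stdVec (i + 1) - ((m i)⁻¹ : ℂ) • stdVec i := by
    intro i
    simp only [smul_sub, smul_smul]
    congr 1
    · congr 1
      exact_mod_cast key_real (m i) (m (i + 1)) (hmpos i) (hmpos (i + 1))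
    · congr 1
      rw [mul_comm (m i) (m (i + 1))]
      exact_mod_cast key_real (m (i + 1)) (m i) (hmpos (i + 1)) (hmpos i)
  rw [map_smul, map_sum]
  simp_rw [map_smul, hT]
  rw [Finset.smul_sum]
  calc (∑ i ∈ Finset.range k, (Real.sqrt (2 / m 1) : ℂ) •
          ((Real.sqrt (m i * m (i + 1)))⁻¹ : ℂ) •
          ((Real.sqrt (m 1 / 2) : ℂ) •
            ((Real.sqrt (m i / m (i + 1)) : ℂ) • stdVec (i + 1)
              - (Real.sqrt (m (i + 1) / m i) : ℂ) • stdVec i)))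
      = ∑ i ∈ Finset.range k,
          (((m (i + 1))⁻¹ : ℂ) • stdVec (i + 1) - ((m i)⁻¹ : ℂ) • stdVec i) := by
        exact Finset.sum_congr rfl (fun i _ => key i)
    _ = ((m k)⁻¹ : ℂ) • stdVec k - ((m 0)⁻¹ : ℂ) • stdVec 0 :=
        Finset.sum_range_sub (fun i => ((m i)⁻¹ : ℂ) • stdVec i) k
    _ = ((m k)⁻¹ : ℂ) • stdVec k - stdVec 0 := by rw [hm0]; simp
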